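/- Let X = {a,b} and let g_1, g_2 : X* → X* be morphisms with g_1(a) = ε, g_1(b) = u, g_2(a) = a^t, g_2(b) = v, where t ≥ 0 and both u and v contain at least one occurrence of b. Then g_1 g_2 = g_2 g_1 if and only if at least one of the following holds: (i) g_1 = g_2; (ii) g_2 is the identity morphism; (iii) t = 0 and uv = vu; (iv) u and v are both powers of b; (v) t = 1 and there exist nonnegative integers α, β, i, j such that u = (a^α b a^β)^i and v = (b a^{α+β})^j b. -/

import Mathlib

/-- Words over the binary alphabet: `false` is the letter `a`, `true` is the letter `b`. -/
abbrev Word := List Bool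

/-- The morphism of the free monoid determined by the images `g` of the letters. -/
def applyG (g : Bool → Word) (w : Word) : Word := w.flatMap g

/-- `a^n`. -/
def rep (n : ℕ) : Word := List.replicate n false

/-- `b a^{α 1} b a^{α 2} ⋯ b a^{α (p-1)} b`, a word with `p` occurrences of `b`. -/
def blockWord (p : ℕ) (α : ℕ → ℕ) : Word :=
  ((List.range (p - 1)).flatMap fun i => true :: rep (α (i + 1))) ++ [true]

/-- `w^k`. -/
def wordPow (w : Word) (k : ℕ) : Word := (List.replicate k w).flatten

/-- `u` and `v` are `a`-conjugates. -/
def AConj (u v : Word) : Prop :=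
  ∃ p q r s : ℕ, ∃ w : Word,
    u = rep p ++ w ++ rep q ∧ v = rep r ++ w ++ rep s ∧ p + q = r + s

/-- `w` is the infinite word `ω(g)`: for every `n`, the word obtained from `g^n(b)` by deleting
all occurrences of `a` preceding the first occurrence of `b` is a prefix of `w`. -/
def IsOmega (g : Bool → Word) (w : ℕ → Bool) : Prop :=
  ∀ n k : ℕ, ∀ hk : k < (((applyG g)^[n] [true]).dropWhile (fun x => !x)).length,
    (((applyG g)^[n] [true]).dropWhile (fun x => !x)).get ⟨k, hk⟩ = w k

/-- `Aw w i` (for `i ≥ 1`): the number of occurrences of `a` in `w` strictly between the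
`i`-th and `(i+1)`-th occurrences of `b` in `w`. -/
noncomputable def Aw (w : ℕ → Bool) (i : ℕ) : ℕ :=
  Nat.nth (fun n => w n = true) i - Nat.nth (fun n => w n = true) (i - 1) - 1

-- auxiliary development

lemma wordPow_zero (w : Word) : wordPow w 0 = [] := rfl
lemma wordPow_succ (w : Word) (k : ℕ) : wordPow w (k+1) = w ++ wordPow w k := by
  simp [wordPow, List.replicate_succ]
lemma wordPow_add (w : Word) (a b : ℕ) : wordPow w (a+b) = wordPow w a ++ wordPow w b := by
  induction a with
  | zero => simp [wordPow_zero]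
  | succ a ih => rw [Nat.succ_add, wordPow_succ, wordPow_succ, ih, List.append_assoc]
lemma wordPow_succ' (w : Word) (k : ℕ) : wordPow w (k+1) = wordPow w k ++ w := by
  rw [wordPow_add, wordPow_succ, wordPow_zero, List.append_nil]
lemma wordPow_mul (w : Word) (a b : ℕ) : wordPow w (a*b) = wordPow (wordPow w a) b := by
  induction b with
  | zero => simp [wordPow_zero]
  | succ b ih => rw [Nat.mul_succ, wordPow_add, wordPow_succ' (wordPow w a) b, ih]

lemma wordPow_length (w : Word) (k : ℕ) : (wordPow w k).length = k * w.length := by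
  induction k with
  | zero => simp [wordPow_zero]
  | succ k ih => rw [wordPow_succ, List.length_append, ih]; ring

lemma count_true_wordPow (w : Word) (k : ℕ) :
    (wordPow w k).count true = k * w.count true := by
  induction k with
  | zero => simp [wordPow_zero]
  | succ k ih => rw [wordPow_succ, List.count_append, ih]; ring

lemma count_false_wordPow (w : Word) (k : ℕ) :
    (wordPow w k).count false = k * w.count false := by
  induction k with
  | zero => simp [wordPow_zero]
  | succ k ih => rw [wordPow_succ, List.count_append, ih]; ring

lemma applyG_nil (g : Bool → Word) : applyG g [] = [] := rfl
lemma applyG_cons (g : Bool → Word) (x : Bool) (w : Word) :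
    applyG g (x :: w) = g x ++ applyG g w := rfl
lemma applyG_append (g : Bool → Word) (w₁ w₂ : Word) :
    applyG g (w₁ ++ w₂) = applyG g w₁ ++ applyG g w₂ := by
  simp [applyG]
lemma applyG_singleton (g : Bool → Word) (x : Bool) : applyG g [x] = g x := by
  simp [applyG]
lemma applyG_wordPow (g : Bool → Word) (w : Word) (k : ℕ) :
    applyG g (wordPow w k) = wordPow (applyG g w) k := by
  induction k with
  | zero => rfl
  | succ k ih => rw [wordPow_succ, applyG_append, ih, wordPow_succ]

-- erasing morphism
lemma applyG_eq_wordPow (g : Bool → Word) (hf : g false = []) (w : Word) :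
    applyG g w = wordPow (g true) (w.count true) := by
  induction w with
  | nil => rfl
  | cons x w ih =>
    cases x <;> simp [applyG_cons, ih, hf, wordPow_succ, List.count_cons]

lemma applyG_rep (g : Bool → Word) (t x : ℕ) (hf : g false = rep t) :
    applyG g (rep x) = rep (t * x) := by
  induction x with
  | zero => rfl
  | succ x ih =>
    rw [rep, List.replicate_succ]
    rw [show (false :: List.replicate x false : Word) = [false] ++ rep x from rfl]
    rw [applyG_append, applyG_singleton, hf, ih]
    rw [rep, rep, ← List.replicate_add]
    congr 1; ring

lemma count_true_rep (n : ℕ) : (rep n).count true = 0 := by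
  simp [rep, List.count_replicate]
lemma count_false_rep (n : ℕ) : (rep n).count false = n := by
  simp [rep, List.count_replicate]
lemma rep_append (a b : ℕ) : rep a ++ rep b = rep (a+b) := by
  rw [rep, rep, rep, List.replicate_add]

-- KEY reduction
lemma key_iff (g₁ g₂ : Bool → Word) (u v : Word) (t : ℕ)
    (h₁a : g₁ false = []) (h₁b : g₁ true = u)
    (h₂a : g₂ false = rep t) (h₂b : g₂ true = v) :
    applyG g₁ ∘ applyG g₂ = applyG g₂ ∘ applyG g₁ ↔ applyG g₁ v = applyG g₂ u := by
  constructor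
  · intro h
    have := congrFun h [true]
    simpa [Function.comp, applyG_singleton, h₁b, h₂b] using this
  · intro h
    funext w
    simp only [Function.comp]
    induction w with
    | nil => rfl
    | cons x w ih =>
      rw [applyG_cons, applyG_append, applyG_cons, applyG_append, ih]
      congr 1
      cases x
      · rw [h₁a, applyG_nil, h₂a, applyG_eq_wordPow g₁ h₁a, count_true_rep, wordPow_zero]
      · rw [h₁b, h₂b]; exact h

-- depends on basics
lemma wordPow_nil (k : ℕ) : wordPow [] k = [] := by
  induction k with
  | zero => rfl
  | succ k ih => rw [wordPow_succ, ih]; rfl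

-- take of wordPow
lemma wordPow_take (w : Word) (k : ℕ) (hk : 1 ≤ k) :
    (wordPow w k).take w.length = w := by
  obtain ⟨k, rfl⟩ := Nat.exists_eq_add_of_le hk
  rw [Nat.add_comm, wordPow_succ, List.take_append_of_le_length le_rfl, List.take_length]

-- equal powers of equal length words
lemma eq_of_wordPow_eq (x y : Word) (q : ℕ) (hq : 1 ≤ q) (hl : x.length = y.length)
    (h : wordPow x q = wordPow y q) : x = y := by
  have := congrArg (List.take x.length) h
  rwa [wordPow_take x q hq, hl, wordPow_take y q hq] at this

-- shift lemma
lemma wordPow_shift (x w : Word) (q : ℕ) :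
    wordPow (x ++ w) q ++ x = x ++ wordPow (w ++ x) q := by
  induction q with
  | zero => simp [wordPow_zero]
  | succ q ih =>
    rw [wordPow_succ, List.append_assoc, ih, wordPow_succ]
    simp [List.append_assoc]

-- Lyndon–Schützenberger (one directional half, with wlog built in)
lemma ls_aux (x y : Word) (p q : ℕ) (hp : 1 ≤ p) (hq : 1 ≤ q)
    (hxy : x.length ≤ y.length) (h : wordPow x p = wordPow y q) :
    x ++ y = y ++ x := by
  have h1 : (wordPow y q).take x.length = x := by rw [← h]; exact wordPow_take x p hp
  have h2 : y.take x.length = (wordPow y q).take x.length := by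
    conv_lhs => rw [← wordPow_take y q hq]
    rw [List.take_take]
    congr 1
    omega
  have hxy' : y.take x.length = x := h2.trans h1
  set w := y.drop x.length with hw
  have hyxw : y = x ++ w := by
    conv_lhs => rw [← List.take_append_drop x.length y]
    rw [hxy']
  have h1' : wordPow x p = wordPow (x ++ w) q := by rw [← hyxw]; exact h
  have h2' : wordPow x p = wordPow (w ++ x) q := by
    have h3 := congrArg (· ++ x) h1'
    rw [wordPow_shift] at h3
    have hx : x ++ wordPow x p = x ++ wordPow (w ++ x) q := by
      rw [← h3, ← wordPow_succ, wordPow_succ']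
    exact List.append_cancel_left hx
  have hcw : x ++ w = w ++ x := by
    apply eq_of_wordPow_eq _ _ q hq (by simp [Nat.add_comm])
    rw [← h1', h2']
  rw [hyxw, List.append_assoc]
  exact congrArg (x ++ ·) hcw

lemma ls (x y : Word) (p q : ℕ) (hp : 1 ≤ p) (hq : 1 ≤ q)
    (h : wordPow x p = wordPow y q) : x ++ y = y ++ x := by
  rcases le_total x.length y.length with hl | hl
  · exact ls_aux x y p q hp hq hl h
  · exact (ls_aux y x q p hq hp hl h.symm).symm

-- commuting words: pow distributes
lemma wordPow_append_comm (x y : Word) (h : x ++ y = y ++ x) (k : ℕ) :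
    wordPow x k ++ y = y ++ wordPow x k := by
  induction k with
  | zero => simp [wordPow_zero]
  | succ k ih =>
    rw [wordPow_succ, List.append_assoc, ih, ← List.append_assoc, h, List.append_assoc]

lemma wordPow_of_append (x y : Word) (h : x ++ y = y ++ x) (k : ℕ) :
    wordPow (x ++ y) k = wordPow x k ++ wordPow y k := by
  induction k with
  | zero => simp [wordPow_zero]
  | succ k ih =>
    rw [wordPow_succ, ih, wordPow_succ, wordPow_succ]
    simp only [List.append_assoc]
    congr 1
    rw [← List.append_assoc, ← List.append_assoc, wordPow_append_comm x y h k]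

-- main commuting-implies-powers-equal lemma
lemma comm_pow_aux : ∀ N, ∀ u v : Word, u.length + v.length ≤ N →
    u ++ v = v ++ u → wordPow u (v.count true) = wordPow v (u.count true) := by
  intro N
  induction N with
  | zero =>
    intro u v hN _
    have hu : u = [] := by cases u <;> simp_all
    have hv : v = [] := by cases v <;> simp_all
    subst hu; subst hv; rfl
  | succ N ih =>
    intro u v hN hc
    rcases List.eq_nil_or_concat u with rfl | _
    · simp [wordPow_zero, wordPow_nil]
    rcases List.eq_nil_or_concat v with rfl | _
    · simp [wordPow_zero, wordPow_nil]
    have hune : u ≠ [] := by rintro rfl; simp_all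
    have hvne : v ≠ [] := by rintro rfl; simp_all
    have hul : 1 ≤ u.length := List.length_pos_iff.mpr hune
    have hvl : 1 ≤ v.length := List.length_pos_iff.mpr hvne
    rcases le_total u.length v.length with hl | hl
    · -- v = u ++ w
      have hupre : u = v.take u.length := by
        have := congrArg (List.take u.length) hc
        rwa [List.take_append_of_le_length le_rfl, List.take_length,
          List.take_append_of_le_length hl] at this
      set w := v.drop u.length with hwdef
      have hv' : v = u ++ w := by
        conv_lhs => rw [← List.take_append_drop u.length v, ← hupre]
      have hcomm : u ++ w = w ++ u := by
        have : u ++ (u ++ w) = (u ++ w) ++ u := by rw [← hv']; exact hc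
        rw [List.append_assoc] at this
        exact List.append_cancel_left this
      have hlen : u.length + w.length ≤ N := by
        have : w.length = v.length - u.length := by rw [hwdef, List.length_drop]
        omega
      have IH := ih u w hlen hcomm
      rw [hv', List.count_append, wordPow_add, wordPow_of_append u w hcomm, IH]
    · -- u = v ++ w : symmetric
      have hvpre : v = u.take v.length := by
        have := congrArg (List.take v.length) hc.symm
        rwa [List.take_append_of_le_length le_rfl, List.take_length,
          List.take_append_of_le_length hl] at this
      set w := u.drop v.length with hwdef
      have hu' : u = v ++ w := by
        conv_lhs => rw [← List.take_append_drop v.length u, ← hvpre]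
      have hcomm : v ++ w = w ++ v := by
        have : v ++ (v ++ w) = (v ++ w) ++ v := by rw [← hu']; exact hc.symm
        rw [List.append_assoc] at this
        exact List.append_cancel_left this
      have hlen : v.length + w.length ≤ N := by
        have : w.length = u.length - v.length := by rw [hwdef, List.length_drop]
        omega
      have IH := ih v w hlen hcomm
      rw [hu', List.count_append, wordPow_add, wordPow_of_append v w hcomm, ← IH]

lemma comm_pow (u v : Word) (hc : u ++ v = v ++ u) :
    wordPow u (v.count true) = wordPow v (u.count true) :=
  comm_pow_aux (u.length + v.length) u v le_rfl hc

-- backward direction helpers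
lemma applyG_id (g : Bool → Word) (ha : g false = [false]) (hb : g true = [true]) (w : Word) :
    applyG g w = w := by
  induction w with
  | nil => rfl
  | cons x w ih => cases x <;> simp [applyG_cons, ha, hb, ih]

lemma applyG_replicate_true (g : Bool → Word) (k : ℕ) :
    applyG g (List.replicate k true) = wordPow (g true) k := by
  induction k with
  | zero => rfl
  | succ k ih => rw [List.replicate_succ, applyG_cons, ih, wordPow_succ]

lemma wordPow_replicate_true (a b : ℕ) :
    wordPow (List.replicate a true) b = List.replicate (b*a) true := by
  induction b with
  | zero => rw [wordPow_zero, Nat.zero_mul, List.replicate_zero]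
  | succ b ih => rw [wordPow_succ, ih, ← List.replicate_add]; congr 1; ring

lemma shift_v (α β j : ℕ) :
    rep α ++ wordPow ([true] ++ rep (α+β)) j = wordPow (rep α ++ [true] ++ rep β) j ++ rep α := by
  induction j with
  | zero => simp [wordPow_zero]
  | succ j ih =>
    rw [wordPow_succ, wordPow_succ]
    have h1 : rep (α + β) = rep β ++ rep α := by rw [rep_append]; congr 1; ring
    calc rep α ++ (([true] ++ rep (α+β)) ++ wordPow ([true] ++ rep (α+β)) j)
        = (rep α ++ [true] ++ rep β) ++ (rep α ++ wordPow ([true] ++ rep (α+β)) j) := by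
          rw [h1]; simp [List.append_assoc]
      _ = (rep α ++ [true] ++ rep β) ++ (wordPow (rep α ++ [true] ++ rep β) j ++ rep α) := by
          rw [ih]
      _ = (rep α ++ [true] ++ rep β) ++ wordPow (rep α ++ [true] ++ rep β) j ++ rep α := by
          simp [List.append_assoc]

lemma base_pow (α β j : ℕ) :
    rep α ++ (wordPow ([true] ++ rep (α+β)) j ++ [true]) ++ rep β =
      wordPow (rep α ++ [true] ++ rep β) (j+1) := by
  rw [wordPow_succ']
  calc rep α ++ (wordPow ([true] ++ rep (α+β)) j ++ [true]) ++ rep β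
      = (rep α ++ wordPow ([true] ++ rep (α+β)) j) ++ [true] ++ rep β := by
        simp [List.append_assoc]
    _ = (wordPow (rep α ++ [true] ++ rep β) j ++ rep α) ++ [true] ++ rep β := by
        rw [shift_v]
    _ = wordPow (rep α ++ [true] ++ rep β) j ++ (rep α ++ [true] ++ rep β) := by
        simp [List.append_assoc]

lemma mpr_main (t : ℕ) (u v : Word)
    (hu : 1 ≤ u.count true) (hv : 1 ≤ v.count true)
    (g₁ g₂ : Bool → Word)
    (h₁a : g₁ false = []) (h₁b : g₁ true = u)
    (h₂a : g₂ false = rep t) (h₂b : g₂ true = v)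
    (H : (g₁ = g₂) ∨
      (g₂ false = [false] ∧ g₂ true = [true]) ∨
      (t = 0 ∧ u ++ v = v ++ u) ∨
      ((∃ k : ℕ, u = List.replicate k true) ∧ (∃ k : ℕ, v = List.replicate k true)) ∨
      (t = 1 ∧ ∃ α β i j : ℕ,
        u = wordPow (rep α ++ [true] ++ rep β) i ∧
        v = wordPow ([true] ++ rep (α + β)) j ++ [true])) :
    applyG g₁ ∘ applyG g₂ = applyG g₂ ∘ applyG g₁ := by
  rcases H with rfl | ⟨ha, hb⟩ | ⟨rfl, hc⟩ | ⟨⟨k, hk⟩, ⟨l, hl⟩⟩ | ⟨rfl, α, β, i, j, hU, hV⟩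
  · rfl
  · funext w
    simp only [Function.comp, applyG_id g₂ ha hb]
  · rw [key_iff g₁ g₂ u v 0 h₁a h₁b h₂a h₂b]
    have h₂a' : g₂ false = [] := h₂a
    rw [applyG_eq_wordPow g₁ h₁a, applyG_eq_wordPow g₂ h₂a', h₁b, h₂b]
    exact comm_pow u v hc
  · rw [key_iff g₁ g₂ u v t h₁a h₁b h₂a h₂b]
    rw [applyG_eq_wordPow g₁ h₁a, h₁b, hk, hl, applyG_replicate_true, h₂b, hl]
    rw [wordPow_replicate_true, wordPow_replicate_true]
    have hcl : (List.replicate l true : Word).count true = l := by simp [List.count_replicate]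
    rw [hcl]
    congr 1
    ring
  · rw [key_iff g₁ g₂ u v 1 h₁a h₁b h₂a h₂b]
    rw [applyG_eq_wordPow g₁ h₁a, h₁b]
    have hcv : v.count true = j + 1 := by
      rw [hV, List.count_append, count_true_wordPow]
      simp [List.count_append, count_true_rep]
    rw [hcv, hU, ← wordPow_mul]
    -- RHS
    have hbase : applyG g₂ (rep α ++ [true] ++ rep β) = rep α ++ v ++ rep β := by
      rw [applyG_append, applyG_append, applyG_singleton, h₂b,
        applyG_rep g₂ 1 α h₂a, applyG_rep g₂ 1 β h₂a, Nat.one_mul, Nat.one_mul]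
    rw [applyG_wordPow, hbase, hV, base_pow, ← wordPow_mul]
    congr 1
    ring

-- gap-list encoding of words
def flatGaps (l : List ℕ) : Word := l.flatMap (fun g => true :: rep g)
def enc (c : ℕ) (l : List ℕ) : Word := rep c ++ flatGaps l
def bump (P : List ℕ) (c : ℕ) : List ℕ := P.dropLast ++ [P.getLastD 0 + c]

lemma flatGaps_nil : flatGaps [] = [] := rfl
lemma flatGaps_cons (g : ℕ) (l : List ℕ) :
    flatGaps (g :: l) = true :: (rep g ++ flatGaps l) := by simp [flatGaps]
lemma flatGaps_append (l₁ l₂ : List ℕ) :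
    flatGaps (l₁ ++ l₂) = flatGaps l₁ ++ flatGaps l₂ := by simp [flatGaps]

lemma count_true_flatGaps (l : List ℕ) : (flatGaps l).count true = l.length := by
  induction l with
  | nil => rfl
  | cons g l ih =>
    rw [flatGaps_cons, List.count_cons, List.count_append, count_true_rep, ih]
    simp

lemma count_false_flatGaps (l : List ℕ) : (flatGaps l).count false = l.sum := by
  induction l with
  | nil => rfl
  | cons g l ih =>
    rw [flatGaps_cons, List.count_cons, List.count_append, count_false_rep, ih]
    simp [List.sum_cons]

lemma count_true_enc (c : ℕ) (l : List ℕ) : (enc c l).count true = l.length := by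
  rw [enc, List.count_append, count_true_rep, count_true_flatGaps]; omega

lemma count_false_enc (c : ℕ) (l : List ℕ) : (enc c l).count false = c + l.sum := by
  rw [enc, List.count_append, count_false_rep, count_false_flatGaps]

lemma exists_enc (w : Word) : ∃ c l, w = enc c l ∧ l.length = w.count true := by
  induction w with
  | nil => exact ⟨0, [], rfl, rfl⟩
  | cons x w ih =>
    obtain ⟨c, l, hw, hl⟩ := ih
    cases x
    · refine ⟨c+1, l, ?_, ?_⟩
      · rw [hw, enc, enc, rep, rep, List.replicate_succ, List.cons_append]
      · rw [hl, List.count_cons]; simp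
    · refine ⟨0, c :: l, ?_, ?_⟩
      · rw [hw]; simp [enc, rep, flatGaps_cons]
      · rw [List.count_cons, List.length_cons, hl]; simp

-- injectivity
lemma rep_true_cancel : ∀ c c' : ℕ, ∀ X X' : Word,
    (X = [] ∨ ∃ Y, X = true :: Y) → (X' = [] ∨ ∃ Y, X' = true :: Y) →
    rep c ++ X = rep c' ++ X' → c = c' ∧ X = X' := by
  intro c
  induction c with
  | zero =>
    intro c' X X' hX hX' h
    cases c' with
    | zero => exact ⟨rfl, h⟩
    | succ c' =>
      exfalso
      simp only [rep, List.replicate_zero, List.nil_append, List.replicate_succ,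
        List.cons_append] at h
      rcases hX with rfl | ⟨Y, rfl⟩ <;> simp_all
  | succ c ih =>
    intro c' X X' hX hX' h
    cases c' with
    | zero =>
      exfalso
      simp only [rep, List.replicate_zero, List.nil_append, List.replicate_succ,
        List.cons_append] at h
      rcases hX' with rfl | ⟨Y, rfl⟩ <;> simp_all
    | succ c' =>
      simp only [rep, List.replicate_succ, List.cons_append] at h
      have h' := List.tail_eq_of_cons_eq h
      obtain ⟨h1, h2⟩ := ih c' X X' hX hX' h'
      exact ⟨by omega, h2⟩

lemma flatGaps_shape (l : List ℕ) : flatGaps l = [] ∨ ∃ Y, flatGaps l = true :: Y := by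
  cases l with
  | nil => left; rfl
  | cons g l => right; exact ⟨rep g ++ flatGaps l, flatGaps_cons g l⟩

lemma flatGaps_inj : ∀ l l' : List ℕ, flatGaps l = flatGaps l' → l = l' := by
  intro l
  induction l with
  | nil =>
    intro l' h
    cases l' with
    | nil => rfl
    | cons g l' => rw [flatGaps_nil, flatGaps_cons] at h; exact absurd h (by simp)
  | cons g l ih =>
    intro l' h
    cases l' with
    | nil => rw [flatGaps_nil, flatGaps_cons] at h; exact absurd h (by simp)
    | cons g' l'' =>
      rw [flatGaps_cons, flatGaps_cons] at h
      have h' := List.tail_eq_of_cons_eq h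
      obtain ⟨h1, h2⟩ := rep_true_cancel g g' _ _ (flatGaps_shape l) (flatGaps_shape l'') h'
      rw [h1, ih l'' h2]

lemma enc_inj (c c' : ℕ) (l l' : List ℕ) (h : enc c l = enc c' l') : c = c' ∧ l = l' := by
  obtain ⟨h1, h2⟩ := rep_true_cancel c c' _ _ (flatGaps_shape l) (flatGaps_shape l') h
  exact ⟨h1, flatGaps_inj l l' h2⟩

-- merging
lemma flatGaps_append_rep (l : List ℕ) (hl : l ≠ []) (c : ℕ) :
    flatGaps l ++ rep c = flatGaps (bump l c) := by
  obtain ⟨l₀, x, rfl⟩ := List.eq_nil_or_concat l |>.resolve_left hl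
  simp only [List.concat_eq_append]
  rw [bump, List.dropLast_concat, List.getLastD_concat]
  rw [flatGaps_append, flatGaps_append]
  simp only [flatGaps]
  simp [rep_append, List.append_assoc]

lemma bump_ne_nil (l : List ℕ) (c : ℕ) : bump l c ≠ [] := by
  simp [bump]

lemma bump_length (l : List ℕ) (hl : l ≠ []) (c : ℕ) : (bump l c).length = l.length := by
  rw [bump, List.length_append, List.length_dropLast]
  have : 1 ≤ l.length := List.length_pos_iff.mpr hl
  simp; omega

lemma enc_append_enc (c c' : ℕ) (l l' : List ℕ) (hl : l ≠ []) :
    enc c l ++ enc c' l' = enc c (bump l c' ++ l') := by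
  rw [enc, enc, enc, flatGaps_append, ← flatGaps_append_rep l hl c']
  simp [List.append_assoc]

lemma pow_enc (c : ℕ) (P : List ℕ) (hP : P ≠ []) :
    ∀ k, wordPow (enc c P) (k+1) = enc c ((List.replicate k (bump P c)).flatten ++ P) := by
  intro k
  induction k with
  | zero => simp [wordPow_succ, wordPow_zero]
  | succ k ih =>
    rw [wordPow_succ, ih, enc_append_enc c c P _ hP, List.replicate_succ,
      List.flatten_cons, List.append_assoc]

-- blocks of the image of a morphism a ↦ a^t, b ↦ enc q0 Q
def blocks (t q0 : ℕ) (Q : List ℕ) (L : List ℕ) : List ℕ :=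
  (L.dropLast.map fun g => bump Q (t*g + q0)).flatten ++ bump Q (t * L.getLastD 0)

lemma getLastD_irrel (l : List ℕ) (hl : l ≠ []) (d d' : ℕ) : l.getLastD d = l.getLastD d' := by
  obtain ⟨l₀, x, rfl⟩ := List.eq_nil_or_concat l |>.resolve_left hl
  simp only [List.concat_eq_append, List.getLastD_concat]

lemma bump_bump (Q : List ℕ) (hQ : Q ≠ []) (a b : ℕ) :
    bump (bump Q a) b = bump Q (a + b) := by
  obtain ⟨l₀, x, rfl⟩ := List.eq_nil_or_concat Q |>.resolve_left hQ
  simp only [List.concat_eq_append, bump, List.dropLast_concat, List.getLastD_concat]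
  rw [List.append_cancel_left_eq]
  congr 1
  omega

lemma applyG_flatGaps (g₂ : Bool → Word) (t q0 : ℕ) (Q : List ℕ) (hQ : Q ≠ [])
    (h₂a : g₂ false = rep t) (h₂b : g₂ true = enc q0 Q) :
    ∀ L : List ℕ, L ≠ [] →
      applyG g₂ (flatGaps L) = rep q0 ++ flatGaps (blocks t q0 Q L) := by
  intro L
  induction L with
  | nil => intro h; exact absurd rfl h
  | cons g L ih =>
    intro _
    rcases L with _ | ⟨g', L'⟩
    · -- singleton
      rw [flatGaps_cons, flatGaps_nil, List.append_nil]
      rw [show (true :: rep g : Word) = [true] ++ rep g from rfl, applyG_append,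
        applyG_singleton, h₂b, applyG_rep g₂ t g h₂a]
      rw [blocks]
      simp only [List.dropLast_singleton, List.map_nil, List.flatten_nil, List.nil_append]
      rw [enc, List.append_assoc, flatGaps_append_rep Q hQ,
        show ([g] : List ℕ).getLastD 0 = g from rfl]
    · -- cons with nonempty tail
      have hL : (g' :: L') ≠ [] := by simp
      rw [flatGaps_cons]
      rw [show (true :: (rep g ++ flatGaps (g' :: L')) : Word)
          = [true] ++ rep g ++ flatGaps (g' :: L') by simp, applyG_append, applyG_append,
        applyG_singleton, h₂b, applyG_rep g₂ t g h₂a, ih hL]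
      rw [blocks, blocks]
      have hdl : (g :: g' :: L').dropLast = g :: (g' :: L').dropLast := List.dropLast_cons₂
      have hgl : (g :: g' :: L').getLastD 0 = (g' :: L').getLastD 0 := by
        rw [List.getLastD_cons]
        exact getLastD_irrel _ hL g 0
      rw [hdl, hgl, List.map_cons, List.flatten_cons]
      rw [enc]
      -- enc q0 Q ++ rep (t*g) ++ (rep q0 ++ X) = rep q0 ++ flatGaps (bump Q (t*g+q0)) ++ X
      rw [flatGaps_append, flatGaps_append]
      calc rep q0 ++ flatGaps Q ++ rep (t*g) ++
            (rep q0 ++ (flatGaps ((g' :: L').dropLast.map fun g => bump Q (t*g + q0)).flatten ++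
              flatGaps (bump Q (t * (g' :: L').getLastD 0))))
          = rep q0 ++ ((flatGaps Q ++ rep (t*g) ++ rep q0) ++
              (flatGaps ((g' :: L').dropLast.map fun g => bump Q (t*g + q0)).flatten ++
              flatGaps (bump Q (t * (g' :: L').getLastD 0)))) := by
            simp [List.append_assoc]
        _ = rep q0 ++ (flatGaps (bump Q (t*g + q0)) ++
              (flatGaps ((g' :: L').dropLast.map fun g => bump Q (t*g + q0)).flatten ++
              flatGaps (bump Q (t * (g' :: L').getLastD 0)))) := by
            rw [List.append_assoc (flatGaps Q), rep_append, flatGaps_append_rep Q hQ]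
        _ = _ := by simp [flatGaps_append, List.append_assoc]

lemma applyG_enc (g₂ : Bool → Word) (t q0 : ℕ) (Q : List ℕ) (hQ : Q ≠ [])
    (h₂a : g₂ false = rep t) (h₂b : g₂ true = enc q0 Q)
    (c : ℕ) (L : List ℕ) (hL : L ≠ []) :
    applyG g₂ (enc c L) = enc (t*c + q0) (blocks t q0 Q L) := by
  rw [enc, applyG_append, applyG_rep g₂ t c h₂a,
    applyG_flatGaps g₂ t q0 Q hQ h₂a h₂b L hL, enc, ← List.append_assoc, rep_append]

-- getD helper lemmas
lemma getD_le_sum (l : List ℕ) (j : ℕ) : l.getD j 0 ≤ l.sum := by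
  induction l generalizing j with
  | nil => simp [List.getD_eq_default]
  | cons a l ih =>
    cases j with
    | zero => rw [List.getD_cons_zero, List.sum_cons]; omega
    | succ j => rw [List.getD_cons_succ, List.sum_cons]; have := ih j; omega

lemma exists_getD_pos (l : List ℕ) (h : 1 ≤ l.sum) : ∃ j, j < l.length ∧ 1 ≤ l.getD j 0 := by
  induction l with
  | nil => simp at h
  | cons a l ih =>
    rcases Nat.eq_zero_or_pos a with ha | ha
    · have h' : 1 ≤ l.sum := by rw [List.sum_cons] at h; omega
      obtain ⟨j, hj, hj1⟩ := ih h'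
      exact ⟨j+1, by simpa using hj, by rwa [List.getD_cons_succ]⟩
    · exact ⟨0, by simp, by rwa [List.getD_cons_zero]⟩

lemma getLastD_eq_getD (l : List ℕ) (hl : l ≠ []) : l.getLastD 0 = l.getD (l.length - 1) 0 := by
  obtain ⟨l₀, x, rfl⟩ := List.eq_nil_or_concat l |>.resolve_left hl
  simp only [List.concat_eq_append, List.getLastD_concat, List.length_append,
    List.length_singleton]
  rw [List.getD_append_right _ _ _ _ (by omega)]
  simp

lemma getLastD_append (L L' : List ℕ) (hL' : L' ≠ []) :
    (L ++ L').getLastD 0 = L'.getLastD 0 := by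
  induction L with
  | nil => rfl
  | cons a L ih =>
    rw [List.cons_append, List.getLastD_cons, getLastD_irrel (L ++ L') (by simp [hL']) a 0, ih]

lemma getD_bump (l : List ℕ) (hl : l ≠ []) (c j : ℕ) :
    (bump l c).getD j 0 = if j = l.length - 1 then l.getD j 0 + c else l.getD j 0 := by
  obtain ⟨l₀, x, rfl⟩ := List.eq_nil_or_concat l |>.resolve_left hl
  simp only [List.concat_eq_append, bump, List.dropLast_concat, List.getLastD_concat,
    List.length_append, List.length_singleton]
  rcases lt_trichotomy j l₀.length with hj | hj | hj
  · rw [List.getD_append _ _ _ _ hj, List.getD_append _ _ _ _ hj, if_neg (by omega)]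
  · subst hj
    rw [List.getD_append_right _ _ _ _ le_rfl, List.getD_append_right _ _ _ _ le_rfl]
    simp
  · rw [List.getD_eq_default, List.getD_eq_default, if_neg (by omega)]
    · simp; omega
    · simp; omega

lemma list_eq_of_getD (l l' : List ℕ) (hlen : l.length = l'.length)
    (h : ∀ j, j < l.length → l.getD j 0 = l'.getD j 0) : l = l' := by
  apply List.ext_getElem hlen
  intro j h1 h2
  rw [← List.getD_eq_getElem l 0 h1, ← List.getD_eq_getElem l' 0 h2]
  exact h j h1

lemma length_one_eq (l : List ℕ) (h : l.length = 1) : l = [l.getD 0 0] := by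
  cases l with
  | nil => simp at h
  | cons a l =>
    cases l with
    | nil => rfl
    | cons b l => simp at h

-- the gap profile of powers of `enc c P`
lemma PK_getD (P : List ℕ) (hP : P ≠ []) (p0 : ℕ) :
    ∀ k j, j < P.length * (k+1) →
    ((List.replicate k (bump P p0)).flatten ++ P).getD j 0 =
      if j = P.length * (k+1) - 1 then P.getD (P.length - 1) 0
      else if j % P.length = P.length - 1 then P.getD (P.length - 1) 0 + p0
      else P.getD (j % P.length) 0 := by
  have hn : 1 ≤ P.length := List.length_pos_iff.mpr hP
  intro k
  induction k with
  | zero =>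
    intro j hj
    simp only [List.replicate_zero, List.flatten_nil, List.nil_append]
    have h1 : P.length * (0+1) = P.length := by ring
    rw [h1] at hj ⊢
    have hjm : j % P.length = j := Nat.mod_eq_of_lt hj
    by_cases he : j = P.length - 1
    · rw [if_pos he, he]
    · rw [if_neg he, hjm, if_neg he]
  | succ k ih =>
    intro j hj
    rw [List.replicate_succ, List.flatten_cons, List.append_assoc]
    have hbl : (bump P p0).length = P.length := bump_length P hP p0
    by_cases hjn : j < P.length
    · rw [List.getD_append _ _ _ _ (by omega)]
      rw [getD_bump P hP p0 j]
      have hne : j ≠ P.length * (k+1+1) - 1 := by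
        have h2 : P.length * 2 ≤ P.length * (k+1+1) := Nat.mul_le_mul_left _ (by omega)
        omega
      have hjm : j % P.length = j := Nat.mod_eq_of_lt hjn
      by_cases he : j = P.length - 1
      · rw [if_pos he, if_neg hne, hjm, if_pos he, he]
      · rw [if_neg he, if_neg hne, hjm, if_neg he]
    · push_neg at hjn
      rw [List.getD_append_right _ _ _ _ (by omega)]
      rw [hbl]
      have hlt : j - P.length < P.length * (k+1) := by
        have e1 : P.length * (k+1+1) = P.length * (k+1) + P.length := by ring
        omega
      rw [ih (j - P.length) hlt]
      have hmod : (j - P.length) % P.length = j % P.length := by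
        conv_rhs => rw [show j = (j - P.length) + P.length by omega]
        rw [Nat.add_mod_right]
      have hbnd : (j - P.length = P.length * (k+1) - 1) ↔ (j = P.length * (k+1+1) - 1) := by
        have e1 : P.length * (k+1+1) = P.length * (k+1) + P.length := by ring
        omega
      rw [hmod]
      by_cases hb : j = P.length * (k+1+1) - 1
      · rw [if_pos (hbnd.mpr hb), if_pos hb]
      · rw [if_neg (fun hc => hb (hbnd.mp hc)), if_neg hb]

-- the gap profile of blocks
lemma blocks_getD (t q0 : ℕ) (Q : List ℕ) (hQ : Q ≠ []) :
    ∀ L : List ℕ, L ≠ [] → ∀ J, J < Q.length * L.length →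
    (blocks t q0 Q L).getD J 0 =
      if J = Q.length * L.length - 1 then Q.getD (Q.length - 1) 0 + t * L.getLastD 0
      else if J % Q.length = Q.length - 1 then
        Q.getD (Q.length - 1) 0 + (t * L.getD (J / Q.length) 0 + q0)
      else Q.getD (J % Q.length) 0 := by
  have hm : 1 ≤ Q.length := List.length_pos_iff.mpr hQ
  intro L
  induction L with
  | nil => intro h; exact absurd rfl h
  | cons g L ih =>
    intro _ J hJ
    rcases L with _ | ⟨g', L'⟩
    · -- singleton [g]
      rw [blocks]
      simp only [List.dropLast_singleton, List.map_nil, List.flatten_nil, List.nil_append,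
        List.length_singleton, Nat.mul_one] at *
      rw [show ([g] : List ℕ).getLastD 0 = g from rfl]
      rw [getD_bump Q hQ _ J]
      have hJm : J % Q.length = J := Nat.mod_eq_of_lt hJ
      by_cases he : J = Q.length - 1
      · rw [if_pos he, if_pos he, he]
      · rw [if_neg he, if_neg he, hJm, if_neg he]
    · -- cons with nonempty tail
      have hL₁ne : (g' :: L' : List ℕ) ≠ [] := by simp
      have hgl : (g :: g' :: L').getLastD 0 = (g' :: L').getLastD 0 := by
        rw [List.getLastD_cons]; exact getLastD_irrel _ hL₁ne g 0
      have hsplit : blocks t q0 Q (g :: g' :: L') =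
          bump Q (t*g + q0) ++ blocks t q0 Q (g' :: L') := by
        rw [blocks, blocks, List.dropLast_cons₂, List.map_cons, List.flatten_cons, hgl,
          List.append_assoc]
      rw [hsplit]
      have hbl : (bump Q (t*g+q0)).length = Q.length := bump_length Q hQ _
      have hlen : (g :: (g' :: L')).length = (g' :: L').length + 1 := rfl
      by_cases hJm : J < Q.length
      · rw [List.getD_append _ _ _ _ (by omega)]
        rw [getD_bump Q hQ _ J]
        have hne : J ≠ Q.length * (g :: (g' :: L')).length - 1 := by
          rw [hlen]
          have h1 : 1 ≤ (g' :: L').length := List.length_pos_iff.mpr hL₁ne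
          have h2 : Q.length * 2 ≤ Q.length * ((g' :: L').length + 1) := Nat.mul_le_mul_left _ (by omega)
          omega
        have hJmod : J % Q.length = J := Nat.mod_eq_of_lt hJm
        by_cases he : J = Q.length - 1
        · rw [if_pos he, if_neg hne, hJmod, if_pos he]
          have hdiv : J / Q.length = 0 := Nat.div_eq_of_lt hJm
          rw [hdiv, List.getD_cons_zero, he]
        · rw [if_neg he, if_neg hne, hJmod, if_neg he]
      · push_neg at hJm
        rw [List.getD_append_right _ _ _ _ (by omega), hbl]
        have hlt : J - Q.length < Q.length * (g' :: L').length := by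
          rw [hlen] at hJ
          have e1 : Q.length * ((g' :: L').length + 1) = Q.length * (g' :: L').length + Q.length := by ring
          omega
        rw [ih hL₁ne (J - Q.length) hlt]
        have hJeq : (J - Q.length) + Q.length = J := by omega
        have hmod : (J - Q.length) % Q.length = J % Q.length := by
          conv_rhs => rw [← hJeq]
          rw [Nat.add_mod_right]
        have hdiv : (J - Q.length) / Q.length + 1 = J / Q.length := by
          conv_rhs => rw [← hJeq]
          rw [Nat.add_div_right _ hm]
        have hbnd : (J - Q.length = Q.length * (g' :: L').length - 1) ↔
            (J = Q.length * (g :: (g' :: L')).length - 1) := by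
          rw [hlen]
          have e1 : Q.length * ((g' :: L').length + 1) = Q.length * (g' :: L').length + Q.length := by ring
          omega
        rw [hmod, hgl]
        by_cases hb : J = Q.length * (g :: (g' :: L')).length - 1
        · rw [if_pos (hbnd.mpr hb), if_pos hb]
        · rw [if_neg (fun hc => hb (hbnd.mp hc)), if_neg hb]
          by_cases hc : J % Q.length = Q.length - 1
          · rw [if_pos hc, if_pos hc, ← hdiv, List.getD_cons_succ]
          · rw [if_neg hc, if_neg hc]

-- number-theoretic dynamics
lemma num_claimA (val : ℕ → ℕ) (n m γ : ℕ) (hn : 1 ≤ n) (hm : 1 ≤ m)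
    (hB : ∀ k, 1 ≤ k → val (k*n) = γ)
    (hC : ∀ i, 1 ≤ i → m ∣ i → val i = val (i/m)) :
    ∀ s x, 1 ≤ x → n ∣ x * m^s → val x = γ := by
  intro s
  induction s with
  | zero =>
    intro x hx hdvd
    rw [pow_zero, Nat.mul_one] at hdvd
    obtain ⟨k, rfl⟩ := hdvd
    have hk : 1 ≤ k := by
      rcases Nat.eq_zero_or_pos k with rfl | h
      · omega
      · exact h
    rw [Nat.mul_comm]
    exact hB k hk
  | succ s ih =>
    intro x hx hdvd
    have h1 : n ∣ (x*m) * m^s := by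
      have : (x*m) * m^s = x * m^(s+1) := by ring
      rwa [this]
    have hxm : 1 ≤ x * m := Nat.mul_pos hx hm
    have h2 : val (x*m) = γ := ih (x*m) hxm h1
    have h3 : val (x*m) = val ((x*m)/m) := hC (x*m) hxm ⟨x, Nat.mul_comm x m⟩
    rw [Nat.mul_div_cancel x hm] at h3
    rw [← h3, h2]

lemma num_tilde (m : ℕ) : ∀ n, 1 ≤ n → ∃ e nt, 1 ≤ nt ∧ nt ∣ n ∧ n ∣ nt * m^e ∧ Nat.Coprime nt m := by
  intro n
  induction n using Nat.strong_induction_on with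
  | _ n ih =>
    intro hn
    by_cases hg : Nat.gcd n m = 1
    · exact ⟨0, n, hn, dvd_rfl, by rw [pow_zero, Nat.mul_one], hg⟩
    · have hgdvd : Nat.gcd n m ∣ n := Nat.gcd_dvd_left n m
      have hgpos : 1 ≤ Nat.gcd n m := Nat.pos_of_ne_zero (by
        intro h
        rw [Nat.gcd_eq_zero_iff] at h
        omega)
      have hg2 : 2 ≤ Nat.gcd n m := by omega
      set g := Nat.gcd n m with hgdef
      have hn' : n / g < n := Nat.div_lt_self (by omega) hg2
      have hn'pos : 1 ≤ n / g := Nat.one_le_div_iff (by omega) |>.mpr (Nat.le_of_dvd (by omega) hgdvd)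
      obtain ⟨e, nt, h1, h2, h3, h4⟩ := ih (n / g) hn' hn'pos
      refine ⟨e+1, nt, h1, h2.trans (Nat.div_dvd_of_dvd hgdvd), ?_, h4⟩
      have hng : n = (n / g) * g := (Nat.div_mul_cancel hgdvd).symm
      calc n = (n / g) * g := hng
        _ ∣ (nt * m^e) * g := Nat.mul_dvd_mul_right h3 g
        _ ∣ (nt * m^e) * m := Nat.mul_dvd_mul_left _ (Nat.gcd_dvd_right n m)
        _ = nt * m^(e+1) := by ring

lemma num_main (val q : ℕ → ℕ) (n m γ : ℕ) (hn : 1 ≤ n) (hm : 2 ≤ m)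
    (hB : ∀ k, 1 ≤ k → val (k*n) = γ)
    (hC : ∀ i, 1 ≤ i → m ∣ i → val i = val (i/m))
    (hD : ∀ i, 1 ≤ i → ¬ m ∣ i → val i = q (i % m)) :
    (∀ r, 1 ≤ r → r < m → q r = γ) ∧ (∀ i, 1 ≤ i → val i = γ) := by
  have hq : ∀ r, 1 ≤ r → r < m → q r = γ := by
    intro r hr hrm
    obtain ⟨e, nt, hnt1, hntn, hne, hcop⟩ := num_tilde m n hn
    have hphi : 1 ≤ m.totient := Nat.totient_pos.mpr (by omega)
    set x := r * nt ^ m.totient with hxdef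
    have hx1 : 1 ≤ x := Nat.mul_pos hr (pow_pos hnt1 _)
    have hdvd : n ∣ x * m^e := by
      calc n ∣ nt * m^e := hne
        _ ∣ x * m^e := by
          apply Nat.mul_dvd_mul_right
          rw [hxdef]
          exact Dvd.dvd.mul_left (dvd_pow_self nt (by omega)) r
    have hvx : val x = γ := num_claimA val n m γ hn (by omega) hB hC e x hx1 hdvd
    have hmod : x % m = r := by
      have heuler : nt ^ m.totient ≡ 1 [MOD m] := Nat.ModEq.pow_totient hcop
      have : x ≡ r * 1 [MOD m] := Nat.ModEq.mul_left r heuler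
      rw [Nat.mul_one] at this
      rw [Nat.ModEq] at this
      rw [this, Nat.mod_eq_of_lt hrm]
    have hnotdvd : ¬ m ∣ x := by
      rw [Nat.dvd_iff_mod_eq_zero]
      omega
    have := hD x hx1 hnotdvd
    rw [hmod] at this
    rw [← this, hvx]
  refine ⟨hq, ?_⟩
  intro i
  induction i using Nat.strong_induction_on with
  | _ i ih =>
    intro hi
    by_cases hdvd : m ∣ i
    · have him : i / m < i := Nat.div_lt_self (by omega) (by omega)
      have him1 : 1 ≤ i / m := Nat.one_le_div_iff (by omega) |>.mpr (Nat.le_of_dvd (by omega) hdvd)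
      rw [hC i hi hdvd]
      exact ih (i/m) him him1
    · rw [hD i hi hdvd]
      have h1 : 1 ≤ i % m := by
        rcases Nat.eq_zero_or_pos (i % m) with h | h
        · exact absurd (Nat.dvd_of_mod_eq_zero h) hdvd
        · exact h
      exact hq (i % m) h1 (Nat.mod_lt i (by omega))

lemma iter_pow (val : ℕ → ℕ) (t m : ℕ) (hm : 1 ≤ m)
    (hC : ∀ i, 1 ≤ i → m ∣ i → val i = t * val (i/m)) (i0 : ℕ) (hi0 : 1 ≤ i0) :
    ∀ s, val (i0 * m^s) = t^s * val i0 := by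
  intro s
  induction s with
  | zero => simp
  | succ s ih =>
    have h1 : 1 ≤ i0 * m^(s+1) := Nat.mul_pos hi0 (pow_pos (by omega) _)
    have h2 : m ∣ i0 * m^(s+1) := Dvd.dvd.mul_left (dvd_pow_self m (by omega)) i0
    rw [hC _ h1 h2]
    have h3 : i0 * m^(s+1) / m = i0 * m^s := by
      rw [pow_succ, ← Nat.mul_assoc]
      exact Nat.mul_div_cancel _ (by omega)
    rw [h3, ih, pow_succ]
    ring

-- reconstruction helpers
lemma getD_replicate' (k j γ : ℕ) (h : j < k) : (List.replicate k γ).getD j 0 = γ := by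
  rw [List.getD_eq_getElem _ _ (by simpa using h)]
  simp

lemma all_true_of_count_false (w : Word) (h : w.count false = 0) :
    w = List.replicate w.length true := by
  induction w with
  | nil => rfl
  | cons x w ih =>
    cases x
    · rw [List.count_cons] at h; simp at h
    · rw [List.count_cons] at h
      simp only [List.length_cons, List.replicate_succ]
      have h' : w.count false = 0 := by omega
      rw [← ih h']

lemma gaps_shape (l : List ℕ) (γ z : ℕ) (hne : l ≠ [])
    (hlast : l.getD (l.length - 1) 0 = z) (hother : ∀ j, j < l.length - 1 → l.getD j 0 = γ) :
    l = List.replicate (l.length - 1) γ ++ [z] := by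
  have hl : 1 ≤ l.length := List.length_pos_iff.mpr hne
  apply list_eq_of_getD
  · simp; omega
  · intro j hj
    by_cases hje : j = l.length - 1
    · subst hje
      rw [List.getD_append_right _ _ _ _ (by simp), hlast]
      simp
    · rw [List.getD_append _ _ _ _ (by simp; omega), getD_replicate' _ _ _ (by omega),
        hother j (by omega)]

lemma pow_base_enc (α β : ℕ) :
    ∀ n, wordPow (rep α ++ [true] ++ rep β) (n+1) = enc α (List.replicate n (β+α) ++ [β]) := by
  intro n
  induction n with
  | zero =>
    rw [wordPow_succ, wordPow_zero, List.append_nil]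
    simp [enc, flatGaps_cons, rep, flatGaps_nil]
  | succ n ih =>
    rw [wordPow_succ, ih]
    rw [enc, enc, List.replicate_succ, List.cons_append, flatGaps_cons]
    calc (rep α ++ [true] ++ rep β) ++ (rep α ++ flatGaps (List.replicate n (β+α) ++ [β]))
        = rep α ++ ([true] ++ ((rep β ++ rep α) ++ flatGaps (List.replicate n (β+α) ++ [β]))) := by
          simp [List.append_assoc]
      _ = rep α ++ (true :: (rep (β+α) ++ flatGaps (List.replicate n (β+α) ++ [β]))) := by
          rw [rep_append]
          rfl
      _ = _ := rfl

lemma v_enc (δ : ℕ) :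
    ∀ j, wordPow ([true] ++ rep δ) j ++ [true] = enc 0 (List.replicate j δ ++ [0]) := by
  intro j
  induction j with
  | zero =>
    rw [wordPow_zero, List.nil_append]
    simp [enc, flatGaps_cons, rep, flatGaps_nil]
  | succ j ih =>
    rw [wordPow_succ, List.append_assoc, ih]
    have enc_zero : ∀ l : List ℕ, enc 0 l = flatGaps l := by
      intro l; simp [enc, rep]
    rw [enc_zero, enc_zero, List.replicate_succ]
    simp only [List.cons_append, flatGaps_cons]
    simp [List.append_assoc]

def Vfun (P : List ℕ) (p0 : ℕ) (j : ℕ) : ℕ :=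
  if j % P.length = P.length - 1 then P.getD (P.length - 1) 0 + p0 else P.getD (j % P.length) 0

lemma Vfun_le (P : List ℕ) (p0 j : ℕ) : Vfun P p0 j ≤ P.sum + p0 := by
  rw [Vfun]
  split
  · have := getD_le_sum P (P.length - 1); omega
  · have := getD_le_sum P (j % P.length); omega

lemma PK_getD' (P : List ℕ) (hP : P ≠ []) (p0 : ℕ) (K : ℕ) (hK : 1 ≤ K) :
    ∀ j, j < P.length * K →
    ((List.replicate (K-1) (bump P p0)).flatten ++ P).getD j 0 =
      if j = P.length * K - 1 then P.getD (P.length - 1) 0 else Vfun P p0 j := by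
  obtain ⟨k, rfl⟩ : ∃ k, K = k+1 := ⟨K-1, by omega⟩
  intro j hj
  have h := PK_getD P hP p0 k j hj
  rw [show k+1-1 = k from rfl, h, Vfun]

-- helper arithmetic
lemma pred_mod_div_dvd (m i : ℕ) (hm : 1 ≤ m) (hi : 1 ≤ i) (h : m ∣ i) :
    (i-1) % m = m - 1 ∧ (i-1) / m = i / m - 1 := by
  obtain ⟨c, rfl⟩ := h
  have hc : 1 ≤ c := by
    rcases Nat.eq_zero_or_pos c with rfl | h
    · omega
    · exact h
  obtain ⟨c', rfl⟩ : ∃ c', c = c'+1 := ⟨c-1, by omega⟩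
  have he : m * (c'+1) - 1 = (m-1) + m * c' := by
    have : m * (c'+1) = m * c' + m := by ring
    omega
  constructor
  · rw [he, Nat.add_mul_mod_self_left, Nat.mod_eq_of_lt (by omega)]
  · rw [he, Nat.add_mul_div_left _ _ (by omega), Nat.div_eq_of_lt (by omega),
      Nat.mul_div_cancel_left _ (by omega : 0 < m)]
    omega

lemma pred_mod_not_dvd (m i : ℕ) (hm : 1 ≤ m) (hi : 1 ≤ i) (h : ¬ m ∣ i) :
    (i-1) % m = i % m - 1 ∧ 1 ≤ i % m := by
  have hr : 1 ≤ i % m := by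
    rcases Nat.eq_zero_or_pos (i % m) with h0 | h0
    · exact absurd (Nat.dvd_of_mod_eq_zero h0) h
    · exact h0
  have hd := Nat.div_add_mod i m
  have hrm : i % m < m := Nat.mod_lt i (by omega)
  have he : i - 1 = (i % m - 1) + m * (i / m) := by omega
  refine ⟨?_, hr⟩
  rw [he, Nat.add_mul_mod_self_left, Nat.mod_eq_of_lt (by omega)]

lemma length_flatten_replicate (k : ℕ) (B : List ℕ) :
    ((List.replicate k B).flatten).length = k * B.length := by
  induction k with
  | zero => simp
  | succ k ih => rw [List.replicate_succ, List.flatten_cons, List.length_append, ih]; ring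

lemma mp_main (t : ℕ) (u v : Word)
    (hu : 1 ≤ u.count true) (hv : 1 ≤ v.count true)
    (g₁ g₂ : Bool → Word)
    (h₁a : g₁ false = []) (h₁b : g₁ true = u)
    (h₂a : g₂ false = rep t) (h₂b : g₂ true = v)
    (H : applyG g₁ ∘ applyG g₂ = applyG g₂ ∘ applyG g₁) :
    (g₁ = g₂) ∨
      (g₂ false = [false] ∧ g₂ true = [true]) ∨
      (t = 0 ∧ u ++ v = v ++ u) ∨
      ((∃ k : ℕ, u = List.replicate k true) ∧ (∃ k : ℕ, v = List.replicate k true)) ∨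
      (t = 1 ∧ ∃ α β i j : ℕ,
        u = wordPow (rep α ++ [true] ++ rep β) i ∧
        v = wordPow ([true] ++ rep (α + β)) j ++ [true]) := by
  have key : wordPow u (v.count true) = applyG g₂ u := by
    have h := (key_iff g₁ g₂ u v t h₁a h₁b h₂a h₂b).mp H
    rw [applyG_eq_wordPow g₁ h₁a, h₁b] at h
    exact h
  by_cases ht0 : t = 0
  · subst ht0
    refine Or.inr (Or.inr (Or.inl ⟨rfl, ?_⟩))
    have h2a' : g₂ false = [] := h₂a
    have h2 : applyG g₂ u = wordPow v (u.count true) := by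
      rw [applyG_eq_wordPow g₂ h2a', h₂b]
    exact ls u v _ _ hv hu (key.trans h2)
  by_cases hua : u.count false = 0
  · have hu' : u = List.replicate u.length true := all_true_of_count_false u hua
    have happ : applyG g₂ u = wordPow v u.length := by
      conv_lhs => rw [hu']
      rw [applyG_replicate_true, h₂b]
    have hveq := key.trans happ
    have hcf : v.count false = 0 := by
      have hc := congrArg (List.count false) hveq
      rw [count_false_wordPow, count_false_wordPow, hua, Nat.mul_zero] at hc
      have hul : 1 ≤ u.length := le_trans hu List.count_le_length
      rcases Nat.mul_eq_zero.mp hc.symm with h | h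
      · omega
      · exact h
    exact Or.inr (Or.inr (Or.inr (Or.inl
      ⟨⟨u.length, hu'⟩, ⟨v.length, all_true_of_count_false v hcf⟩⟩)))
  · obtain ⟨p0, P, hPu, hPlen⟩ := exists_enc u
    obtain ⟨q0, Q, hQv, hQlen⟩ := exists_enc v
    have hn : 1 ≤ P.length := by rw [hPlen]; exact hu
    have hm : 1 ≤ Q.length := by rw [hQlen]; exact hv
    have hPne : P ≠ [] := by intro h; rw [h] at hn; simp at hn
    have hQne : Q ≠ [] := by intro h; rw [h] at hm; simp at hm
    have h₂bQ : g₂ true = enc q0 Q := h₂b.trans hQv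
    have key' : wordPow u Q.length = applyG g₂ u := by rw [hQlen]; exact key
    have master : ∀ k : ℕ,
        enc p0 ((List.replicate (Q.length*(k+1)-1) (bump P p0)).flatten ++ P)
        = enc (t*p0 + q0) (blocks t q0 Q ((List.replicate k (bump P p0)).flatten ++ P)) := by
      intro k
      have hQk : 1 ≤ Q.length * (k+1) := Nat.mul_pos hm (by omega)
      have h1 : wordPow u (Q.length*(k+1)) = applyG g₂ (wordPow u (k+1)) := by
        rw [applyG_wordPow, ← key', ← wordPow_mul]
      have h2 : wordPow u (Q.length*(k+1)) =
          enc p0 ((List.replicate (Q.length*(k+1)-1) (bump P p0)).flatten ++ P) := by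
        conv_lhs => rw [hPu, show Q.length*(k+1) = (Q.length*(k+1)-1)+1 by omega]
        exact pow_enc p0 P hPne _
      have h3 : applyG g₂ (wordPow u (k+1)) =
          enc (t*p0+q0) (blocks t q0 Q ((List.replicate k (bump P p0)).flatten ++ P)) := by
        rw [hPu, pow_enc p0 P hPne k]
        exact applyG_enc g₂ t q0 Q hQne h₂a h₂bQ p0 _
          (fun hh => hPne (List.append_eq_nil_iff.mp hh).2)
      exact h2.symm.trans (h1.trans h3)
    have prefix_eq : p0 = t*p0 + q0 := (enc_inj _ _ _ _ (master 0)).1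
    have listeq : ∀ k, (List.replicate (Q.length*(k+1)-1) (bump P p0)).flatten ++ P
        = blocks t q0 Q ((List.replicate k (bump P p0)).flatten ++ P) :=
      fun k => (enc_inj _ _ _ _ (master k)).2
    have lenPK : ∀ k : ℕ, ((List.replicate k (bump P p0)).flatten ++ P).length
        = P.length * (k+1) := by
      intro k
      rw [List.length_append, length_flatten_replicate, bump_length P hPne]
      ring
    have lastPK : ∀ k : ℕ, ((List.replicate k (bump P p0)).flatten ++ P).getLastD 0
        = P.getD (P.length - 1) 0 := by
      intro k
      rw [getLastD_append _ _ hPne, getLastD_eq_getD P hPne]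
    have suffix_eq : P.getD (P.length-1) 0
        = Q.getD (Q.length-1) 0 + t * P.getD (P.length-1) 0 := by
      have hnm : 1 ≤ P.length * Q.length := Nat.mul_pos hn hm
      have hL : ((List.replicate (Q.length*(0+1)-1) (bump P p0)).flatten ++ P).getD
            (P.length * Q.length - 1) 0
          = (blocks t q0 Q ((List.replicate 0 (bump P p0)).flatten ++ P)).getD
            (P.length * Q.length - 1) 0 := by rw [listeq 0]
      have e2 : P.length * (Q.length*(0+1)) = P.length * Q.length := by ring
      have hlhs := PK_getD' P hPne p0 (Q.length*(0+1)) (by omega)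
        (P.length * Q.length - 1) (by rw [e2]; omega)
      rw [e2, if_pos rfl] at hlhs
      have hrhs := blocks_getD t q0 Q hQne ((List.replicate 0 (bump P p0)).flatten ++ P)
        (fun hh => hPne (List.append_eq_nil_iff.mp hh).2) (P.length * Q.length - 1)
        (by rw [lenPK 0]; have e3 : Q.length * (P.length*(0+1)) = P.length * Q.length := by
              ring
            rw [e3]; omega)
      rw [lenPK 0] at hrhs
      have e3 : Q.length * (P.length*(0+1)) = P.length * Q.length := by ring
      rw [e3, if_pos rfl, lastPK 0] at hrhs
      rw [hlhs, hrhs] at hL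
      exact hL
    have hgetD : ∀ J : ℕ, Vfun P p0 J =
        if J % Q.length = Q.length - 1
        then Q.getD (Q.length-1) 0 + (t * Vfun P p0 (J / Q.length) + q0)
        else Q.getD (J % Q.length) 0 := by
      intro J
      set k := J + 1 with hk
      have e1 : 1*(k+1) ≤ Q.length*(k+1) := Nat.mul_le_mul_right _ hm
      have e2 : 1*(Q.length*(k+1)) ≤ P.length*(Q.length*(k+1)) :=
        Nat.mul_le_mul_right _ hn
      have hJlt : J + 2 ≤ P.length * (Q.length * (k+1)) := by omega
      have hL : ((List.replicate (Q.length*(k+1)-1) (bump P p0)).flatten ++ P).getD J 0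
          = (blocks t q0 Q ((List.replicate k (bump P p0)).flatten ++ P)).getD J 0 := by
        rw [listeq k]
      have hlhs := PK_getD' P hPne p0 (Q.length*(k+1)) (by omega) J (by omega)
      have hrhs := blocks_getD t q0 Q hQne ((List.replicate k (bump P p0)).flatten ++ P)
        (fun hh => hPne (List.append_eq_nil_iff.mp hh).2) J
        (by rw [lenPK k]
            have e3 : Q.length * (P.length*(k+1)) = P.length * (Q.length*(k+1)) := by ring
            omega)
      rw [lenPK k] at hrhs
      have e3 : Q.length * (P.length*(k+1)) = P.length * (Q.length*(k+1)) := by ring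
      have hb1 : J ≠ P.length * (Q.length*(k+1)) - 1 := by omega
      have hb2 : J ≠ Q.length * (P.length*(k+1)) - 1 := by omega
      rw [if_neg hb1] at hlhs
      rw [if_neg hb2] at hrhs
      by_cases hcond : J % Q.length = Q.length - 1
      · rw [if_pos hcond] at hrhs
        have e4 : 1*(k+1) ≤ P.length*(k+1) := Nat.mul_le_mul_right _ hn
        have hdle : J / Q.length ≤ J := Nat.div_le_self J _
        have hdivlt : J / Q.length < P.length * (k+1) := by omega
        have hdivne : J / Q.length ≠ P.length*(k+1) - 1 := by omega
        have hinner := PK_getD' P hPne p0 (k+1) (by omega) (J / Q.length) hdivlt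
        rw [if_neg hdivne] at hinner
        simp only [Nat.add_sub_cancel] at hinner
        rw [hinner] at hrhs
        rw [hlhs, hrhs] at hL
        rw [if_pos hcond]
        exact hL
      · rw [if_neg hcond] at hrhs
        rw [hlhs, hrhs] at hL
        rw [if_neg hcond]
        exact hL
    by_cases ht2 : 2 ≤ t
    · exfalso
      have h2p : 2*p0 ≤ t*p0 := Nat.mul_le_mul_right p0 ht2
      have hp0 : p0 = 0 := by omega
      have hq0 : q0 = 0 := by omega
      have h2n : 2 * P.getD (P.length-1) 0 ≤ t * P.getD (P.length-1) 0 :=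
        Nat.mul_le_mul_right _ ht2
      have hpn : P.getD (P.length-1) 0 = 0 := by omega
      have hqm : Q.getD (Q.length-1) 0 = 0 := by omega
      have hsum : 1 ≤ P.sum := by
        have hc : u.count false = p0 + P.sum := by rw [hPu, count_false_enc]
        omega
      obtain ⟨j0, hj0l, hj0p⟩ := exists_getD_pos P hsum
      have hj0ne : j0 ≠ P.length - 1 := by
        intro hh; rw [hh] at hj0p; omega
      have hVj0 : 1 ≤ Vfun P p0 j0 := by
        rw [Vfun, Nat.mod_eq_of_lt (by omega : j0 < P.length)]
        rw [if_neg hj0ne]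
        exact hj0p
      have hC2 : ∀ i, 1 ≤ i → Q.length ∣ i →
          Vfun P p0 (i-1) = t * Vfun P p0 (i/Q.length - 1) := by
        intro i hi hdvd
        obtain ⟨hmod, hdiv⟩ := pred_mod_div_dvd Q.length i hm hi hdvd
        rw [hgetD (i-1), if_pos hmod, hqm, hq0, hdiv]
        omega
      have hiter := iter_pow (fun i => Vfun P p0 (i-1)) t Q.length hm hC2 (j0+1) (by omega)
      have hs := hiter (P.sum + p0)
      simp only [Nat.add_sub_cancel] at hs
      have hle : Vfun P p0 ((j0+1) * Q.length^(P.sum + p0) - 1) ≤ P.sum + p0 :=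
        Vfun_le P p0 _
      have h2B : 2^(P.sum + p0) ≤ t^(P.sum + p0) := Nat.pow_le_pow_left ht2 _
      have hmul : t^(P.sum + p0) * 1 ≤ t^(P.sum + p0) * Vfun P p0 j0 :=
        Nat.mul_le_mul_left _ hVj0
      have hlt := Nat.lt_two_pow_self (n := P.sum + p0)
      omega
    · have ht1 : t = 1 := by omega
      subst ht1
      have e1 : 1*p0 = p0 := Nat.one_mul p0
      have hq0 : q0 = 0 := by omega
      have e2 : 1 * P.getD (P.length-1) 0 = P.getD (P.length-1) 0 := Nat.one_mul _
      have hqm : Q.getD (Q.length-1) 0 = 0 := by omega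
      by_cases hm1 : Q.length = 1
      · have hQ1 : Q = [0] := by
          have h := length_one_eq Q hm1
          rw [hm1] at hqm
          rw [hqm] at h
          exact h
        have hv1 : v = [true] := by
          rw [hQv, hQ1, hq0]
          rfl
        exact Or.inr (Or.inl ⟨by rw [h₂a]; rfl, by rw [h₂b, hv1]⟩)
      · have hm2 : 2 ≤ Q.length := by omega
        have hBnum : ∀ k, 1 ≤ k → Vfun P p0 (k*P.length - 1)
            = P.getD (P.length-1) 0 + p0 := by
          intro k hk
          have hdvd : P.length ∣ k*P.length := ⟨k, Nat.mul_comm k P.length⟩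
          have hkn : 1 ≤ k * P.length := Nat.mul_pos hk hn
          obtain ⟨hmod, _⟩ := pred_mod_div_dvd P.length (k*P.length) hn hkn hdvd
          rw [Vfun, hmod, if_pos rfl]
        have hCnum : ∀ i, 1 ≤ i → Q.length ∣ i →
            Vfun P p0 (i-1) = Vfun P p0 (i/Q.length - 1) := by
          intro i hi hdvd
          obtain ⟨hmod, hdiv⟩ := pred_mod_div_dvd Q.length i hm hi hdvd
          rw [hgetD (i-1), if_pos hmod, hqm, hq0, hdiv]
          omega
        have hDnum : ∀ i, 1 ≤ i → ¬ Q.length ∣ i →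
            Vfun P p0 (i-1) = Q.getD (i % Q.length - 1) 0 := by
          intro i hi hnd
          obtain ⟨hmod, hr⟩ := pred_mod_not_dvd Q.length i hm hi hnd
          have hrm : i % Q.length < Q.length := Nat.mod_lt i (by omega)
          have hne : (i-1) % Q.length ≠ Q.length - 1 := by rw [hmod]; omega
          rw [hgetD (i-1), if_neg hne, hmod]
        obtain ⟨hqγ, hvγ⟩ := num_main (fun i => Vfun P p0 (i-1))
          (fun r => Q.getD (r-1) 0) P.length Q.length
          (P.getD (P.length-1) 0 + p0) hn hm2 hBnum hCnum hDnum
        have hPj : ∀ j, j < P.length - 1 → P.getD j 0 = P.getD (P.length-1) 0 + p0 := by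
          intro j hj
          have h := hvγ (j+1) (by omega)
          simp only [Nat.add_sub_cancel] at h
          rw [Vfun, Nat.mod_eq_of_lt (by omega : j < P.length), if_neg (by omega)] at h
          exact h
        have hQj : ∀ j, j < Q.length - 1 → Q.getD j 0 = P.getD (P.length-1) 0 + p0 := by
          intro j hj
          have h := hqγ (j+1) (by omega) (by omega)
          simp only [Nat.add_sub_cancel] at h
          exact h
        have hPeq := gaps_shape P (P.getD (P.length-1) 0 + p0) (P.getD (P.length-1) 0)
          hPne rfl hPj
        have hQeq := gaps_shape Q (P.getD (P.length-1) 0 + p0) 0 hQne hqm hQj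
        refine Or.inr (Or.inr (Or.inr (Or.inr
          ⟨rfl, p0, P.getD (P.length-1) 0, P.length, Q.length - 1, ?_, ?_⟩)))
        · have e := pow_base_enc p0 (P.getD (P.length-1) 0) (P.length - 1)
          rw [Nat.sub_add_cancel hn] at e
          rw [hPu, e, ← hPeq]
        · have e := v_enc (p0 + P.getD (P.length-1) 0) (Q.length - 1)
          have ecomm : P.getD (P.length-1) 0 + p0 = p0 + P.getD (P.length-1) 0 :=
            Nat.add_comm _ _
          rw [ecomm] at hQeq
          rw [hQv, hq0, e, ← hQeq]

/-- with `g₁(a)=ε`, `g₁(b)=u`, `g₂(a)=a^t`, `g₂(b)=v`, both `u` and `v`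
containing `b`, `g₁g₂ = g₂g₁` iff one of (i)–(v) holds. -/
theorem stmt17 (t : ℕ) (u v : Word)
    (hu : 1 ≤ u.count true) (hv : 1 ≤ v.count true)
    (g₁ g₂ : Bool → Word)
    (h₁a : g₁ false = []) (h₁b : g₁ true = u)
    (h₂a : g₂ false = rep t) (h₂b : g₂ true = v) :
    applyG g₁ ∘ applyG g₂ = applyG g₂ ∘ applyG g₁ ↔
      (g₁ = g₂) ∨
      (g₂ false = [false] ∧ g₂ true = [true]) ∨
      (t = 0 ∧ u ++ v = v ++ u) ∨
      ((∃ k : ℕ, u = List.replicate k true) ∧ (∃ k : ℕ, v = List.replicate k true)) ∨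
      (t = 1 ∧ ∃ α β i j : ℕ,
        u = wordPow (rep α ++ [true] ++ rep β) i ∧
        v = wordPow ([true] ++ rep (α + β)) j ++ [true]) := by
  exact ⟨mp_main t u v hu hv g₁ g₂ h₁a h₁b h₂a h₂b,
    mpr_main t u v hu hv g₁ g₂ h₁a h₁b h₂a h₂b⟩
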